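/- Instruction-following bound for ε-ambiguous languages: suppose q(x, y) = Σ_{θ'} q(x, θ')·r_{θ'}(y) where each r_{θ'}(y) := Σ_θ q(θ | θ')·q(y | θ) ∈ [0,1], and Σ_{θ'≠θ_x} q(x, θ') ≤ ε·q(x, θ_x) with q(x, θ_x) > 0 and ε ∈ [0,1). Then |q(x, y)/q(x) − r_{θ_x}(y)| ≤ ε. -/

import Mathlib

open scoped ENNReal

open Classical in
/-- Auxiliary: split an `ℝ≥0∞` tsum at a distinguished point. -/
lemma tsum_split_at {Θ : Type*} [Countable Θ] (f : Θ → ℝ≥0∞) (θx : Θ) :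
    ∑' θ', f θ' = f θx + ∑' θ' : {θ' : Θ // θ' ≠ θx}, f θ'.1 := by
  have h2 : (∑' θ' : {θ' : Θ // θ' ≠ θx}, f θ'.1)
      = ∑' θ', if θ' = θx then 0 else f θ' := by
    refine (tsum_subtype {θ' : Θ | θ' ≠ θx} f).trans (tsum_congr fun θ' => ?_)
    by_cases h : θ' = θx <;> simp [Set.indicator, h]
  rw [h2, ENNReal.tsum_eq_add_tsum_ite θx]

/-- eq. 11: instruction-following bound for ε-ambiguous
languages.  `q θ' = q(x, θ')` and `r θ' = Σ_θ q(θ|θ')·q(y|θ) ∈ [0,1]`, so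
`q(x,y) = Σ_{θ'} q(x,θ')·r_{θ'}(y)`; the LLM response distribution deviates
from the ideal mixture `r θ_x` by at most ε (two one-sided inequalities). -/
theorem instruction_eps_bound {Θ : Type*} [Countable Θ]
    (q r : Θ → ℝ≥0∞) (θx : Θ) (ε : ℝ≥0∞)
    (hr1 : ∀ θ', r θ' ≤ 1)
    (hpos : 0 < q θx) (hfin : ∑' θ', q θ' ≠ ⊤)
    (hres : ∑' θ' : {θ' : Θ // θ' ≠ θx}, q θ'.1 ≤ ε * q θx)
    (hε : ε < 1) :
    (∑' θ', q θ' * r θ') / (∑' θ', q θ') ≤ r θx + ε ∧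
    r θx ≤ (∑' θ', q θ' * r θ') / (∑' θ', q θ') + ε := by
  set S := ∑' θ', q θ' with hS
  set T := ∑' θ', q θ' * r θ' with hT
  have hqS : q θx ≤ S := ENNReal.le_tsum θx
  have hS0 : S ≠ 0 := fun h => hpos.ne' (le_antisymm (h ▸ hqS) zero_le)
  have hsplitS : S = q θx + ∑' θ' : {θ' : Θ // θ' ≠ θx}, q θ'.1 := tsum_split_at q θx
  have hsplitT : T = q θx * r θx + ∑' θ' : {θ' : Θ // θ' ≠ θx}, q θ'.1 * r θ'.1 :=
    tsum_split_at (fun θ' => q θ' * r θ') θx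
  have hRT : (∑' θ' : {θ' : Θ // θ' ≠ θx}, q θ'.1 * r θ'.1) ≤ ε * q θx := by
    refine le_trans (ENNReal.tsum_le_tsum fun θ' => ?_) hres
    calc q θ'.1 * r θ'.1 ≤ q θ'.1 * 1 := mul_le_mul_right (hr1 _) _
    _ = q θ'.1 := mul_one _
  constructor
  · apply ENNReal.div_le_of_le_mul
    calc T ≤ q θx * r θx + ε * q θx := by rw [hsplitT]; exact add_le_add_right hRT _
    _ ≤ r θx * S + ε * S := add_le_add (by rw [mul_comm]; exact mul_le_mul_right hqS _)
        (mul_le_mul_right hqS _)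
    _ = (r θx + ε) * S := (add_mul _ _ _).symm
  · have key : r θx * S ≤ T + ε * S := by
      calc r θx * S = r θx * q θx + r θx * (∑' θ' : {θ' : Θ // θ' ≠ θx}, q θ'.1) := by
            rw [hsplitS, mul_add]
      _ ≤ q θx * r θx + 1 * (ε * q θx) := add_le_add (le_of_eq (mul_comm _ _))
            (mul_le_mul' (hr1 _) hres)
      _ = q θx * r θx + ε * q θx := by rw [one_mul]
      _ ≤ T + ε * S := add_le_add (hsplitT ▸ le_self_add) (mul_le_mul_right hqS _)
    have h1 : r θx ≤ (T + ε * S) / S :=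
      (ENNReal.le_div_iff_mul_le (Or.inl hS0) (Or.inl hfin)).2 key
    calc r θx ≤ (T + ε * S) / S := h1
    _ = T / S + ε * S / S := ENNReal.add_div
    _ = T / S + ε := by rw [mul_div_assoc, ENNReal.div_self hS0 hfin, mul_one]
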